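/- For every integer ℘ ≥ 6 with ℘ ≡ 2 (mod 4), the Toeplitz graph T_℘⟨{1, 2, ℘−1}⟩ satisfies 1 ≤ ldim_f(T_℘⟨{1, 2, ℘−1}⟩) ≤ 2. -/

import Mathlib

open Finset

/-- A local resolving function of a graph `G`: a map `ζ : V → [0,1]` such that for every
pair of adjacent vertices `u v`, the sum of `ζ` over the local resolving neighborhood
`R{u,v} = {w : d(w,u) ≠ d(w,v)}` is at least `1`. -/
def IsLocalResolvingFunction {V : Type*} [Fintype V] (G : SimpleGraph V) (ζ : V → ℝ) : Prop :=
  (∀ w, ζ w ∈ Set.Icc (0 : ℝ) 1) ∧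
    ∀ u v, G.Adj u v →
      1 ≤ ∑ w ∈ Finset.univ.filter (fun w => G.dist w u ≠ G.dist w v), ζ w

/-- The local fractional metric dimension of `G`: the minimum of `∑ v, ζ v` over all
local resolving functions `ζ` of `G`. -/
noncomputable def ldimf {V : Type*} [Fintype V] (G : SimpleGraph V) : ℝ :=
  sInf {s : ℝ | ∃ ζ : V → ℝ, IsLocalResolvingFunction G ζ ∧ s = ∑ v, ζ v}

/-- The Toeplitz graph `T_n⟨S⟩` (vertices `0, …, n-1` standing for `1, …, n`):
two distinct vertices are adjacent iff their absolute difference lies in `S`. -/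
def toeplitzGraph (n : ℕ) (S : Set ℕ) : SimpleGraph (Fin n) where
  Adj p q := p ≠ q ∧ Nat.dist (p : ℕ) (q : ℕ) ∈ S
  symm := ⟨fun p q ⟨h1, h2⟩ => ⟨h1.symm, by rwa [Nat.dist_comm]⟩⟩
  loopless := ⟨fun p ⟨h, _⟩ => h rfl⟩

/-- In the Toeplitz graph `T_p⟨{1,2,p-1}⟩` there is a walk between any two vertices of
length at most `⌈Nat.dist i j / 2⌉`. -/
lemma toeplitz_exists_walk (p : ℕ) (hp : 6 ≤ p) :
    ∀ δ (i j : Fin p), Nat.dist (i : ℕ) (j : ℕ) = δ →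
      ∃ W : (toeplitzGraph p {1, 2, p - 1}).Walk i j, W.length ≤ (δ + 1) / 2 := by
  intro δ
  induction δ using Nat.strong_induction_on with
  | _ δ ih =>
    intro i j hd
    match δ, hd with
    | 0, hd =>
      have : i = j := by
        apply Fin.ext
        have := Nat.eq_of_dist_eq_zero hd
        exact this
      subst this
      exact ⟨SimpleGraph.Walk.nil, by simp⟩
    | 1, hd =>
      have hadj : (toeplitzGraph p {1, 2, p - 1}).Adj i j := by
        refine ⟨?_, by rw [hd]; left; rfl⟩
        intro h; subst h; simp [Nat.dist_self] at hd
      exact ⟨SimpleGraph.Walk.cons hadj SimpleGraph.Walk.nil, by simp⟩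
    | (δ + 2), hd =>
      rcases lt_or_ge (i : ℕ) (j : ℕ) with hlt | hge
      · -- step from i to i+2
        have hij : (i : ℕ) + 2 ≤ (j : ℕ) := by
          simp [Nat.dist] at hd; omega
        have hi2 : (i : ℕ) + 2 < p := lt_of_le_of_lt hij j.isLt
        set i' : Fin p := ⟨(i : ℕ) + 2, hi2⟩ with hi'
        have hadj : (toeplitzGraph p {1, 2, p - 1}).Adj i i' := by
          refine ⟨?_, ?_⟩
          · intro h
            have : (i : ℕ) = (i : ℕ) + 2 := congrArg Fin.val h
            omega
          · have : Nat.dist (i : ℕ) ((i : ℕ) + 2) = 2 := by simp [Nat.dist]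
            rw [hi']
            simpa [this] using (by right; left; rfl :
              (2 : ℕ) ∈ ({1, 2, p - 1} : Set ℕ))
        have hd' : Nat.dist (i' : ℕ) (j : ℕ) = δ := by
          simp [hi', Nat.dist] at hd ⊢; omega
        obtain ⟨W, hW⟩ := ih δ (by omega) i' j hd'
        exact ⟨SimpleGraph.Walk.cons hadj W, by simp; omega⟩
      · -- step from i to i-2
        have hij : (j : ℕ) + 2 ≤ (i : ℕ) := by
          simp [Nat.dist] at hd; omega
        have hi2 : (i : ℕ) - 2 < p := lt_of_le_of_lt (by omega) i.isLt
        set i' : Fin p := ⟨(i : ℕ) - 2, hi2⟩ with hi'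
        have hadj : (toeplitzGraph p {1, 2, p - 1}).Adj i i' := by
          refine ⟨?_, ?_⟩
          · intro h
            have : (i : ℕ) = (i : ℕ) - 2 := congrArg Fin.val h
            omega
          · have : Nat.dist (i : ℕ) ((i : ℕ) - 2) = 2 := by
              simp [Nat.dist]; omega
            rw [hi']
            simpa [this] using (by right; left; rfl :
              (2 : ℕ) ∈ ({1, 2, p - 1} : Set ℕ))
        have hd' : Nat.dist (i' : ℕ) (j : ℕ) = δ := by
          simp [hi', Nat.dist] at hd ⊢; omega
        obtain ⟨W, hW⟩ := ih δ (by omega) i' j hd'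
        exact ⟨SimpleGraph.Walk.cons hadj W, by simp; omega⟩

/-- A `1`-Lipschitz potential bounds walk lengths from below. -/
lemma nat_dist_le_walk_length {V : Type*} (G : SimpleGraph V) (φ : V → ℕ)
    (h : ∀ u v, G.Adj u v → Nat.dist (φ u) (φ v) ≤ 1) :
    ∀ {i j : V} (W : G.Walk i j), Nat.dist (φ i) (φ j) ≤ W.length := by
  intro i j W
  induction W with
  | nil => simp [Nat.dist_self]
  | @cons a b c h' W ih =>
    calc Nat.dist (φ a) (φ c) ≤ Nat.dist (φ a) (φ b) + Nat.dist (φ b) (φ c) :=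
          Nat.dist.triangle_inequality _ _ _
      _ ≤ 1 + W.length := by
          have := h _ _ h'
          omega
      _ = (SimpleGraph.Walk.cons h' W).length := by simp [Nat.add_comm]

/-- The distance formula from one of the two middle vertices in
`T_p⟨{1,2,p-1}⟩` with `p = 4k+2`. -/
lemma toeplitz_dist_eq (p k : ℕ) (hk : 1 ≤ k) (hpk : p = 4 * k + 2)
    (x : Fin p) (hx : (x : ℕ) = 2 * k ∨ (x : ℕ) = 2 * k + 1) (j : Fin p) :
    (toeplitzGraph p {1, 2, p - 1}).dist x j = (Nat.dist (x : ℕ) (j : ℕ) + 1) / 2 := by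
  have hp6 : 6 ≤ p := by omega
  obtain ⟨W, hW⟩ := toeplitz_exists_walk p hp6 (Nat.dist (x : ℕ) (j : ℕ)) x j rfl
  have hub : (toeplitzGraph p {1, 2, p - 1}).dist x j ≤ (Nat.dist (x : ℕ) (j : ℕ) + 1) / 2 :=
    le_trans (SimpleGraph.dist_le W) hW
  -- lower bound via potential φ
  set φ : Fin p → ℕ := fun w => (Nat.dist (x : ℕ) (w : ℕ) + 1) / 2 with hφ
  have hlip : ∀ u v, (toeplitzGraph p {1, 2, p - 1}).Adj u v → Nat.dist (φ u) (φ v) ≤ 1 := by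
    rintro u v ⟨hne, hS⟩
    have hu := u.isLt
    have hv := v.isLt
    simp only [hφ]
    rcases hS with h1 | h2 | h3
    · simp [Nat.dist] at h1 ⊢; omega
    · simp [Nat.dist] at h2 ⊢; omega
    · simp [Nat.dist] at h3 ⊢; omega
  have hreach : (toeplitzGraph p {1, 2, p - 1}).Reachable x j := ⟨W⟩
  obtain ⟨W', hW'⟩ := hreach.exists_walk_length_eq_dist
  have hlb : Nat.dist (φ x) (φ j) ≤ (toeplitzGraph p {1, 2, p - 1}).dist x j := by
    rw [← hW']
    exact nat_dist_le_walk_length _ φ hlip W'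
  have hφx : φ x = 0 := by simp [hφ, Nat.dist_self]
  have : Nat.dist (φ x) (φ j) = (Nat.dist (x : ℕ) (j : ℕ) + 1) / 2 := by
    rw [hφx]; simp [hφ, Nat.dist]
  omega

/-- For every integer `℘ ≥ 6` with `℘ ≡ 2 (mod 4)`,
`1 ≤ ldimf(T_℘⟨{1, 2, ℘-1}⟩) ≤ 2`. -/
theorem ldimf_toeplitz_mod_four_two (p : ℕ) (hp : 6 ≤ p) (hmod : p % 4 = 2) :
    1 ≤ ldimf (toeplitzGraph p {1, 2, p - 1}) ∧
      ldimf (toeplitzGraph p {1, 2, p - 1}) ≤ 2 := by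
  obtain ⟨k, hk, hpk⟩ : ∃ k, 1 ≤ k ∧ p = 4 * k + 2 := ⟨p / 4, by omega, by omega⟩
  set G := toeplitzGraph p {1, 2, p - 1} with hG
  have hA : 2 * k < p := by omega
  have hB : 2 * k + 1 < p := by omega
  set A : Fin p := ⟨2 * k, hA⟩ with hAdef
  set B : Fin p := ⟨2 * k + 1, hB⟩ with hBdef
  have hAB : A ≠ B := by
    intro h
    have := congrArg Fin.val h
    simp [hAdef, hBdef] at this
  set ζ : Fin p → ℝ := fun w => (if w = A then 1 else 0) + (if w = B then 1 else 0) with hζ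
  have hζnn : ∀ w, 0 ≤ ζ w := by
    intro w; simp only [hζ]; positivity
  have hζle : ∀ w, ζ w ≤ 1 := by
    intro w; simp only [hζ]
    split_ifs with h1 h2
    · exact absurd (h1 ▸ h2) hAB
    all_goals norm_num
  have hsum : ∑ w, ζ w = 2 := by
    simp only [hζ]
    rw [Finset.sum_add_distrib]
    simp
    norm_num
  -- the key resolving property
  have hkey : ∀ u v : Fin p, G.Adj u v →
      G.dist A u ≠ G.dist A v ∨ G.dist B u ≠ G.dist B v := by
    rintro u v ⟨hne, hS⟩
    rw [toeplitz_dist_eq p k hk hpk A (Or.inl rfl) u,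
        toeplitz_dist_eq p k hk hpk A (Or.inl rfl) v,
        toeplitz_dist_eq p k hk hpk B (Or.inr rfl) u,
        toeplitz_dist_eq p k hk hpk B (Or.inr rfl) v]
    have hu := u.isLt
    have hv := v.isLt
    have hne' : (u : ℕ) ≠ (v : ℕ) := fun h => hne (Fin.ext h)
    simp only [hAdef, hBdef]
    rcases hS with h1 | h2 | h3
    · simp [Nat.dist] at h1 ⊢; omega
    · simp [Nat.dist] at h2 ⊢; omega
    · simp [Nat.dist] at h3 ⊢; omega
  have hres : IsLocalResolvingFunction G ζ := by
    constructor
    · exact fun w => ⟨hζnn w, hζle w⟩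
    · intro u v hadj
      rcases hkey u v hadj with h | h
      · have hmem : A ∈ Finset.univ.filter (fun w => G.dist w u ≠ G.dist w v) := by
          simp [h]
        calc (1 : ℝ) = ζ A := by simp [hζ, hAB]
          _ ≤ _ := Finset.single_le_sum (fun i _ => hζnn i) hmem
      · have hmem : B ∈ Finset.univ.filter (fun w => G.dist w u ≠ G.dist w v) := by
          simp [h]
        calc (1 : ℝ) = ζ B := by simp [hζ, hAB.symm]
          _ ≤ _ := Finset.single_le_sum (fun i _ => hζnn i) hmem
  -- the graph has at least one edge (0 and 1)
  have h0 : (0 : ℕ) < p := by omega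
  have h1 : (1 : ℕ) < p := by omega
  have hedge : G.Adj ⟨0, h0⟩ ⟨1, h1⟩ := by
    refine ⟨?_, ?_⟩
    · intro h; have := congrArg Fin.val h; simp at this
    · show Nat.dist 0 1 ∈ ({1, 2, p - 1} : Set ℕ)
      left; rfl
  -- every member of the set is ≥ 1
  have hge1 : ∀ s ∈ {s : ℝ | ∃ ζ : Fin p → ℝ, IsLocalResolvingFunction G ζ ∧ s = ∑ v, ζ v},
      (1 : ℝ) ≤ s := by
    rintro s ⟨ζ', ⟨hbd, hre⟩, rfl⟩
    calc (1 : ℝ) ≤ ∑ w ∈ Finset.univ.filter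
          (fun w => G.dist w ⟨0, h0⟩ ≠ G.dist w ⟨1, h1⟩), ζ' w := hre _ _ hedge
      _ ≤ ∑ v, ζ' v := by
          apply Finset.sum_le_sum_of_subset_of_nonneg (Finset.filter_subset _ _)
          exact fun i _ _ => (hbd i).1
  have hmem2 : (2 : ℝ) ∈ {s : ℝ | ∃ ζ : Fin p → ℝ, IsLocalResolvingFunction G ζ ∧ s = ∑ v, ζ v} :=
    ⟨ζ, hres, hsum.symm⟩
  constructor
  · exact le_csInf ⟨2, hmem2⟩ hge1
  · exact csInf_le ⟨1, hge1⟩ hmem2
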